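/- Let v₁, v₂ ∈ L¹(ℝ₊) be real-valued. Then the differential equation φ'(x) = -v₁(x) sin(2φ(x)) - v₂(x) cos(2φ(x)) admits a unique real-valued absolutely continuous solution φ on ℝ₊ with φ(x) → 0 as x → ∞. -/

import Mathlib

open MeasureTheory Set Real Filter
open scoped BoundedContinuousFunction

namespace Stmt1Aux

/-! ### Basic trigonometric estimates -/

lemma abs_sin_sub (a b : ℝ) : |Real.sin a - Real.sin b| ≤ |a - b| := by
  rw [Real.sin_sub_sin]
  have h1 := Real.abs_sin_le_abs (x := (a - b) / 2)
  have h2 := Real.abs_cos_le_one ((a + b) / 2)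
  have h3 : |(a - b) / 2| = |a - b| / 2 := by rw [abs_div]; norm_num
  rw [abs_mul, abs_mul, abs_two]
  rw [h3] at h1
  nlinarith [abs_nonneg (Real.sin ((a - b) / 2)), abs_nonneg (a - b),
    abs_nonneg (Real.cos ((a + b) / 2))]

lemma abs_cos_sub (a b : ℝ) : |Real.cos a - Real.cos b| ≤ |a - b| := by
  rw [Real.cos_sub_cos]
  have h1 := Real.abs_sin_le_abs (x := (a - b) / 2)
  have h2 := Real.abs_sin_le_one ((a + b) / 2)
  have h3 : |(a - b) / 2| = |a - b| / 2 := by rw [abs_div]; norm_num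
  rw [abs_mul, abs_mul]
  rw [h3] at h1
  rw [show |(-2 : ℝ)| = 2 by norm_num]
  nlinarith [abs_nonneg (Real.sin ((a - b) / 2)), abs_nonneg (a - b),
    abs_nonneg (Real.sin ((a + b) / 2))]

/-! ### The vector field and its bounds -/

noncomputable def Ff (V₁ V₂ : ℝ → ℝ) (t y : ℝ) : ℝ :=
  V₁ t * Real.sin (2 * y) + V₂ t * Real.cos (2 * y)

noncomputable def Lf (V₁ V₂ : ℝ → ℝ) (t : ℝ) : ℝ := |V₁ t| + |V₂ t|

variable {V₁ V₂ : ℝ → ℝ}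

lemma Lf_nonneg (t : ℝ) : 0 ≤ Lf V₁ V₂ t := add_nonneg (abs_nonneg _) (abs_nonneg _)

lemma abs_Ff_le (t y : ℝ) : |Ff V₁ V₂ t y| ≤ Lf V₁ V₂ t := by
  refine (abs_add_le _ _).trans ?_
  rw [abs_mul, abs_mul]
  have h1 := Real.abs_sin_le_one (2 * y)
  have h2 := Real.abs_cos_le_one (2 * y)
  have := abs_nonneg (V₁ t); have := abs_nonneg (V₂ t)
  unfold Lf; nlinarith

lemma abs_Ff_sub_le (t y y' : ℝ) :
    |Ff V₁ V₂ t y - Ff V₁ V₂ t y'| ≤ 2 * Lf V₁ V₂ t * |y - y'| := by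
  have hre : Ff V₁ V₂ t y - Ff V₁ V₂ t y'
      = V₁ t * (Real.sin (2 * y) - Real.sin (2 * y'))
        + V₂ t * (Real.cos (2 * y) - Real.cos (2 * y')) := by unfold Ff; ring
  rw [hre]
  refine (abs_add_le _ _).trans ?_
  rw [abs_mul, abs_mul]
  have h1 := abs_sin_sub (2 * y) (2 * y')
  have h2 := abs_cos_sub (2 * y) (2 * y')
  have h3 : |2 * y - 2 * y'| = 2 * |y - y'| := by
    rw [show 2 * y - 2 * y' = 2 * (y - y') by ring, abs_mul, abs_two]
  rw [h3] at h1 h2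
  have := abs_nonneg (V₁ t); have := abs_nonneg (V₂ t); have := abs_nonneg (y - y')
  unfold Lf; nlinarith

lemma integrable_Lf (hi₁ : Integrable V₁) (hi₂ : Integrable V₂) :
    Integrable (Lf V₁ V₂) := hi₁.abs.add hi₂.abs

lemma measurable_Lf (hm₁ : Measurable V₁) (hm₂ : Measurable V₂) :
    Measurable (Lf V₁ V₂) := hm₁.abs.add hm₂.abs

lemma measurable_Ff_comp (hm₁ : Measurable V₁) (hm₂ : Measurable V₂)
    {φ : ℝ → ℝ} (hφ : Measurable φ) :
    Measurable fun t => Ff V₁ V₂ t (φ t) :=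
  (hm₁.mul (hφ.const_mul 2).sin).add (hm₂.mul (hφ.const_mul 2).cos)

lemma integrable_Ff_comp (hm₁ : Measurable V₁) (hm₂ : Measurable V₂)
    (hi₁ : Integrable V₁) (hi₂ : Integrable V₂) {φ : ℝ → ℝ} (hφ : Measurable φ) :
    Integrable fun t => Ff V₁ V₂ t (φ t) :=
  (integrable_Lf hi₁ hi₂).mono'
    (measurable_Ff_comp hm₁ hm₂ hφ).aestronglyMeasurable
    (ae_of_all _ fun t => by rw [Real.norm_eq_abs]; exact abs_Ff_le t (φ t))

lemma integrable_Lf_mul (hm₁ : Measurable V₁) (hm₂ : Measurable V₂)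
    (hi₁ : Integrable V₁) (hi₂ : Integrable V₂) {e : ℝ → ℝ} (hem : Measurable e)
    {D : ℝ} (heb : ∀ t, |e t| ≤ D) :
    Integrable fun t => Lf V₁ V₂ t * |e t| :=
  ((integrable_Lf hi₁ hi₂).mul_const D).mono'
    ((measurable_Lf hm₁ hm₂).mul hem.abs).aestronglyMeasurable
    (ae_of_all _ fun t => by
      rw [Real.norm_eq_abs, abs_of_nonneg (mul_nonneg (Lf_nonneg t) (abs_nonneg _))]
      exact mul_le_mul_of_nonneg_left (heb t) (Lf_nonneg t))

/-! ### Tail-integral toolkit -/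

lemma integral_Ioi_eq_sub {h : ℝ → ℝ} (hh : Integrable h) (y : ℝ) :
    ∫ t in Ioi y, h t = (∫ t in Ioi (0:ℝ), h t) - ∫ t in (0:ℝ)..y, h t := by
  rcases le_total (0:ℝ) y with hy | hy
  · rw [intervalIntegral.integral_of_le hy]
    have hsplit : ∫ t in Ioi (0:ℝ), h t
        = (∫ t in Ioc (0:ℝ) y, h t) + ∫ t in Ioi y, h t := by
      rw [← setIntegral_union (Ioc_disjoint_Ioi le_rfl) measurableSet_Ioi
        hh.integrableOn hh.integrableOn, Ioc_union_Ioi_eq_Ioi hy]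
    linarith
  · rw [intervalIntegral.integral_symm, intervalIntegral.integral_of_le hy]
    have hsplit : ∫ t in Ioi y, h t
        = (∫ t in Ioc y (0:ℝ), h t) + ∫ t in Ioi (0:ℝ), h t := by
      rw [← setIntegral_union (Ioc_disjoint_Ioi le_rfl) measurableSet_Ioi
        hh.integrableOn hh.integrableOn, Ioc_union_Ioi_eq_Ioi hy]
    linarith

lemma continuous_integral_Ioi {h : ℝ → ℝ} (hh : Integrable h) :
    Continuous fun y => ∫ t in Ioi y, h t := by
  have : (fun y => ∫ t in Ioi y, h t)
      = fun y => (∫ t in Ioi (0:ℝ), h t) - ∫ t in (0:ℝ)..y, h t :=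
    funext (integral_Ioi_eq_sub hh)
  rw [this]
  exact continuous_const.sub (hh.continuous_primitive 0)

lemma tendsto_integral_Ioi {h : ℝ → ℝ} (hh : Integrable h) :
    Tendsto (fun y => ∫ t in Ioi y, h t) atTop (nhds 0) := by
  have he : (fun y => ∫ t in Ioi y, h t)
      = fun y => (∫ t in Ioi (0:ℝ), h t) - ∫ t in (0:ℝ)..y, h t :=
    funext (integral_Ioi_eq_sub hh)
  rw [he]
  have := tendsto_const_nhds (x := ∫ t in Ioi (0:ℝ), h t) (f := atTop (α := ℝ)) |>.sub
    (intervalIntegral_tendsto_integral_Ioi 0 hh.integrableOn tendsto_id)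
  simpa using this

lemma integral_Ioi_split {h : ℝ → ℝ} (hh : Integrable h) {a c : ℝ} (hac : a ≤ c) :
    ∫ t in Ioi a, h t = (∫ t in Ioc a c, h t) + ∫ t in Ioi c, h t := by
  rw [← setIntegral_union (Ioc_disjoint_Ioi le_rfl) measurableSet_Ioi
    hh.integrableOn hh.integrableOn, Ioc_union_Ioi_eq_Ioi hac]

lemma exists_cut {h : ℝ → ℝ} (hh : Integrable h) (h0 : ∀ t, 0 ≤ h t)
    {a v : ℝ} (hv : 0 < v) (hva : v ≤ ∫ t in Ioi a, h t) :
    ∃ c, a ≤ c ∧ ∫ t in Ioi c, h t = v := by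
  have hev : ∀ᶠ (y : ℝ) in atTop, (∫ t in Ioi y, h t) < v :=
    (tendsto_integral_Ioi hh).eventually_lt_const hv
  obtain ⟨b, hb1, hb2⟩ := (hev.and (eventually_ge_atTop a)).exists
  have hcont : ContinuousOn (fun y => ∫ t in Ioi y, h t) (Icc a b) :=
    (continuous_integral_Ioi hh).continuousOn
  have := intermediate_value_Icc' hb2 hcont (a := a) (b := b)
  have hmem : v ∈ Icc ((fun y => ∫ t in Ioi y, h t) b) ((fun y => ∫ t in Ioi y, h t) a) :=
    ⟨hb1.le, hva⟩
  obtain ⟨c, hc, hceq⟩ := this hmem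
  exact ⟨c, hc.1, hceq⟩

/-! ### Abstract Grönwall-type lemma -/

lemma gronwall_abs {L d : ℝ → ℝ} (hLi : Integrable L) (hL0 : ∀ t, 0 ≤ L t)
    (hdm : Measurable d) (hd0 : ∀ t, 0 ≤ d t) {M : ℝ} (hdb : ∀ t, d t ≤ M)
    {a : ℝ} (hsmall : (∫ t in Ioi a, L t) ≤ 2⁻¹)
    (hrec : ∀ x, a ≤ x → d x ≤ ∫ t in Ioi x, L t * d t) :
    ∀ x, a ≤ x → d x = 0 := by
  have hM0 : 0 ≤ M := (hd0 0).trans (hdb 0)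
  have hLd : Integrable fun t => L t * d t := by
    refine (hLi.mul_const M).mono'
      (hLi.aestronglyMeasurable.mul hdm.aestronglyMeasurable)
      (ae_of_all _ fun t => ?_)
    rw [Real.norm_eq_abs, abs_of_nonneg (mul_nonneg (hL0 t) (hd0 t))]
    exact mul_le_mul_of_nonneg_left (hdb t) (hL0 t)
  set u : ℝ → ℝ := fun y => ∫ t in Ioi y, L t * d t with hu
  have hu0 : ∀ y, 0 ≤ u y := fun y =>
    setIntegral_nonneg measurableSet_Ioi fun t _ => mul_nonneg (hL0 t) (hd0 t)
  have huanti : ∀ y z, y ≤ z → u z ≤ u y := fun y z h =>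
    setIntegral_mono_set hLd.integrableOn
      (ae_of_all _ fun t => mul_nonneg (hL0 t) (hd0 t))
      ((Ioi_subset_Ioi h).eventuallyLE)
  have hucont : Continuous u := continuous_integral_Ioi hLd
  have hU : ∀ y, u y ≤ ∫ t, L t * d t := fun y =>
    setIntegral_le_integral hLd (ae_of_all _ fun t => mul_nonneg (hL0 t) (hd0 t))
  have hLu : Integrable fun t => L t * u t := by
    refine (hLi.mul_const (∫ t, L t * d t)).mono'
      (hLi.aestronglyMeasurable.mul hucont.measurable.aestronglyMeasurable)
      (ae_of_all _ fun t => ?_)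
    rw [Real.norm_eq_abs, abs_of_nonneg (mul_nonneg (hL0 t) (hu0 t))]
    exact mul_le_mul_of_nonneg_left (hU t) (hL0 t)
  intro x hx
  have h1 : u x ≤ ∫ t in Ioi x, L t * u t := by
    refine setIntegral_mono_on hLd.integrableOn hLu.integrableOn measurableSet_Ioi
      fun t ht => ?_
    exact mul_le_mul_of_nonneg_left (hrec t (hx.trans (le_of_lt ht))) (hL0 t)
  have h2 : ∫ t in Ioi x, L t * u t ≤ ∫ t in Ioi x, L t * u x := by
    refine setIntegral_mono_on hLu.integrableOn
      ((hLi.mul_const (u x)).integrableOn) measurableSet_Ioi fun t ht => ?_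
    exact mul_le_mul_of_nonneg_left (huanti x t (le_of_lt ht)) (hL0 t)
  have h3 : ∫ t in Ioi x, L t * u x = (∫ t in Ioi x, L t) * u x :=
    integral_mul_const (u x) L
  have h4 : (∫ t in Ioi x, L t) ≤ 2⁻¹ :=
    le_trans (setIntegral_mono_set hLi.integrableOn (ae_of_all _ hL0)
      ((Ioi_subset_Ioi hx).eventuallyLE)) hsmall
  have h5 : (∫ t in Ioi x, L t) * u x ≤ 2⁻¹ * u x :=
    mul_le_mul_of_nonneg_right h4 (hu0 x)
  have h6 : u x = 0 := le_antisymm (by linarith) (hu0 x)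
  have h7 : d x ≤ u x := hrec x hx
  exact le_antisymm (by rw [← h6]; exact h7) (hd0 x)
/-! ### The contraction/fixed-point construction -/

lemma exists_fixedPoint (hm₁ : Measurable V₁) (hm₂ : Measurable V₂)
    (hi₁ : Integrable V₁) (hi₂ : Integrable V₂) (a : ℝ)
    (E : (ℝ →ᵇ ℝ) → ℝ → ℝ) (hEm : ∀ ψ, Measurable (E ψ))
    (hEb : ∀ ψ ψ' t, |E ψ t - E ψ' t| ≤ dist ψ ψ')
    (hEd : ∀ ψ ψ', (∫ t in Ioi a, Lf V₁ V₂ t * |E ψ t - E ψ' t|) ≤ 4⁻¹ * dist ψ ψ') :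
    ∃ ψ : ℝ →ᵇ ℝ, ∀ x, ψ x = ∫ t in Ioi (max x a), Ff V₁ V₂ t (E ψ t) := by
  have hLi := integrable_Lf hi₁ hi₂
  have hLm := measurable_Lf hm₁ hm₂
  have hint : ∀ ψ : ℝ →ᵇ ℝ, Integrable (fun t => Ff V₁ V₂ t (E ψ t)) := fun ψ =>
    integrable_Ff_comp hm₁ hm₂ hi₁ hi₂ (hEm ψ)
  have hbound : ∀ (ψ : ℝ →ᵇ ℝ) (x : ℝ),
      ‖∫ t in Ioi (max x a), Ff V₁ V₂ t (E ψ t)‖ ≤ ∫ t, Lf V₁ V₂ t := by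
    intro ψ x
    calc ‖∫ t in Ioi (max x a), Ff V₁ V₂ t (E ψ t)‖
        ≤ ∫ t in Ioi (max x a), Lf V₁ V₂ t := by
          refine norm_integral_le_of_norm_le hLi.integrableOn (ae_of_all _ fun t => ?_)
          rw [Real.norm_eq_abs]; exact abs_Ff_le t (E ψ t)
      _ ≤ ∫ t, Lf V₁ V₂ t :=
          setIntegral_le_integral hLi (ae_of_all _ fun t => Lf_nonneg t)
  set T : (ℝ →ᵇ ℝ) → (ℝ →ᵇ ℝ) := fun ψ =>
    BoundedContinuousFunction.ofNormedAddCommGroup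
      (fun x => ∫ t in Ioi (max x a), Ff V₁ V₂ t (E ψ t))
      ((continuous_integral_Ioi (hint ψ)).comp (continuous_id.max continuous_const))
      (∫ t, Lf V₁ V₂ t) (hbound ψ) with hT
  have hTapp : ∀ (ψ : ℝ →ᵇ ℝ) (x : ℝ),
      T ψ x = ∫ t in Ioi (max x a), Ff V₁ V₂ t (E ψ t) := fun ψ x => rfl
  have hdiffint : ∀ ψ ψ' : ℝ →ᵇ ℝ,
      Integrable fun t => Lf V₁ V₂ t * |E ψ t - E ψ' t| := fun ψ ψ' =>
    integrable_Lf_mul hm₁ hm₂ hi₁ hi₂ ((hEm ψ).sub (hEm ψ')) (hEb ψ ψ')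
  have hdist : ∀ ψ ψ', dist (T ψ) (T ψ') ≤ 2⁻¹ * dist ψ ψ' := by
    intro ψ ψ'
    refine (BoundedContinuousFunction.dist_le
      (mul_nonneg (by norm_num) dist_nonneg)).2 fun x => ?_
    rw [Real.dist_eq, hTapp, hTapp,
      ← integral_sub (hint ψ).integrableOn (hint ψ').integrableOn]
    have habs : |∫ t in Ioi (max x a), (Ff V₁ V₂ t (E ψ t) - Ff V₁ V₂ t (E ψ' t))|
        ≤ ∫ t in Ioi (max x a), |Ff V₁ V₂ t (E ψ t) - Ff V₁ V₂ t (E ψ' t)| := by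
      rw [← Real.norm_eq_abs]
      refine (norm_integral_le_integral_norm _).trans (le_of_eq ?_)
      simp [Real.norm_eq_abs]
    refine habs.trans ?_
    have hstep1 : ∫ t in Ioi (max x a), |Ff V₁ V₂ t (E ψ t) - Ff V₁ V₂ t (E ψ' t)|
        ≤ ∫ t in Ioi (max x a), 2 * (Lf V₁ V₂ t * |E ψ t - E ψ' t|) := by
      refine setIntegral_mono_on (((hint ψ).sub (hint ψ')).abs).integrableOn
        (((hdiffint ψ ψ').const_mul 2).integrableOn) measurableSet_Ioi fun t _ => ?_
      have := abs_Ff_sub_le (V₁ := V₁) (V₂ := V₂) t (E ψ t) (E ψ' t)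
      calc |Ff V₁ V₂ t (E ψ t) - Ff V₁ V₂ t (E ψ' t)|
          ≤ 2 * Lf V₁ V₂ t * |E ψ t - E ψ' t| := this
        _ = 2 * (Lf V₁ V₂ t * |E ψ t - E ψ' t|) := by ring
    refine hstep1.trans ?_
    have hstep2 : ∫ t in Ioi (max x a), 2 * (Lf V₁ V₂ t * |E ψ t - E ψ' t|)
        ≤ ∫ t in Ioi a, 2 * (Lf V₁ V₂ t * |E ψ t - E ψ' t|) := by
      refine setIntegral_mono_set ((hdiffint ψ ψ').const_mul 2).integrableOn
        (ae_of_all _ fun t => mul_nonneg zero_le_two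
          (mul_nonneg (Lf_nonneg t) (abs_nonneg _)))
        ((Ioi_subset_Ioi (le_max_right x a)).eventuallyLE)
    refine hstep2.trans ?_
    rw [integral_const_mul 2 (fun t => Lf V₁ V₂ t * |E ψ t - E ψ' t|)]
    have := hEd ψ ψ'
    nlinarith [dist_nonneg (x := ψ) (y := ψ')]
  have hcw : ContractingWith (1/2 : NNReal) T := by
    constructor
    · rw [← NNReal.coe_lt_coe]; norm_num
    · refine LipschitzWith.of_dist_le_mul fun ψ ψ' => ?_
      have := hdist ψ ψ'
      have hc : ((1/2 : NNReal) : ℝ) = 2⁻¹ := by norm_num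
      rw [hc]; exact this
  refine ⟨ContractingWith.fixedPoint T hcw, fun x => ?_⟩
  have hfix : T (ContractingWith.fixedPoint T hcw) = ContractingWith.fixedPoint T hcw :=
    hcw.fixedPoint_isFixedPt
  conv_lhs => rw [← hfix]
  exact hTapp _ x
/-! ### Existence of the decaying solution on a tail -/

lemma exists_sol (hm₁ : Measurable V₁) (hm₂ : Measurable V₂)
    (hi₁ : Integrable V₁) (hi₂ : Integrable V₂) :
    ∀ (k : ℕ) (a : ℝ), (∫ t in Ioi a, Lf V₁ V₂ t) ≤ (k + 1 : ℝ) * 4⁻¹ →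
      ∃ φ : ℝ → ℝ, Continuous φ ∧
        ∀ x, φ x = ∫ t in Ioi (max x a), Ff V₁ V₂ t (φ t) := by
  have hLi := integrable_Lf hi₁ hi₂
  intro k
  induction k with
  | zero =>
    intro a ha
    have hEd : ∀ ψ ψ' : ℝ →ᵇ ℝ,
        (∫ t in Ioi a, Lf V₁ V₂ t * |(ψ : ℝ → ℝ) t - ψ' t|) ≤ 4⁻¹ * dist ψ ψ' := by
      intro ψ ψ'
      have hEb : ∀ t, |(ψ : ℝ → ℝ) t - ψ' t| ≤ dist ψ ψ' := fun t => by
        rw [← Real.dist_eq]; exact BoundedContinuousFunction.dist_coe_le_dist t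
      calc (∫ t in Ioi a, Lf V₁ V₂ t * |(ψ : ℝ → ℝ) t - ψ' t|)
          ≤ ∫ t in Ioi a, Lf V₁ V₂ t * dist ψ ψ' := by
            refine setIntegral_mono_on
              (integrable_Lf_mul hm₁ hm₂ hi₁ hi₂
                (ψ.continuous.measurable.sub ψ'.continuous.measurable) hEb).integrableOn
              ((hLi.mul_const _).integrableOn) measurableSet_Ioi fun t _ =>
              mul_le_mul_of_nonneg_left (hEb t) (Lf_nonneg t)
        _ = (∫ t in Ioi a, Lf V₁ V₂ t) * dist ψ ψ' := integral_mul_const _ _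
        _ ≤ 4⁻¹ * dist ψ ψ' := by
            have h4 : (∫ t in Ioi a, Lf V₁ V₂ t) ≤ 4⁻¹ := by
              have : ((0:ℕ) + 1 : ℝ) * 4⁻¹ = 4⁻¹ := by norm_num
              rw [this] at ha; exact ha
            exact mul_le_mul_of_nonneg_right h4 dist_nonneg
    obtain ⟨ψ, hψ⟩ := exists_fixedPoint hm₁ hm₂ hi₁ hi₂ a (fun ψ => ⇑ψ)
      (fun ψ => ψ.continuous.measurable)
      (fun ψ ψ' t => by
        rw [← Real.dist_eq]; exact BoundedContinuousFunction.dist_coe_le_dist t)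
      hEd
    exact ⟨ψ, ψ.continuous, hψ⟩
  | succ k ih =>
    intro a ha
    by_cases hk : (∫ t in Ioi a, Lf V₁ V₂ t) ≤ (k + 1 : ℝ) * 4⁻¹
    · exact ih a hk
    push_neg at hk
    obtain ⟨c, hac, hc⟩ := exists_cut hLi Lf_nonneg
      (show (0:ℝ) < (k + 1 : ℝ) * 4⁻¹ by positivity) hk.le
    obtain ⟨φ₀, hφ₀c, hφ₀⟩ := ih c (le_of_eq hc)
    have hsmall : (∫ t in Ioc a c, Lf V₁ V₂ t) ≤ 4⁻¹ := by
      have hsp := integral_Ioi_split hLi hac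
      rw [hc] at hsp
      push_cast at ha hsp ⊢
      linarith
    set E : (ℝ →ᵇ ℝ) → ℝ → ℝ := fun ψ t => if t ≤ c then ψ t else φ₀ t with hE
    have hEm : ∀ ψ, Measurable (E ψ) := fun ψ =>
      Measurable.ite measurableSet_Iic ψ.continuous.measurable hφ₀c.measurable
    have hEb : ∀ ψ ψ' t, |E ψ t - E ψ' t| ≤ dist ψ ψ' := by
      intro ψ ψ' t
      by_cases htc : t ≤ c
      · simp only [hE, if_pos htc]
        rw [← Real.dist_eq]; exact BoundedContinuousFunction.dist_coe_le_dist t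
      · simp only [hE, if_neg htc, sub_self, abs_zero]; exact dist_nonneg
    have hEd : ∀ ψ ψ', (∫ t in Ioi a, Lf V₁ V₂ t * |E ψ t - E ψ' t|) ≤ 4⁻¹ * dist ψ ψ' := by
      intro ψ ψ'
      have hdint : Integrable fun t => Lf V₁ V₂ t * |E ψ t - E ψ' t| :=
        integrable_Lf_mul hm₁ hm₂ hi₁ hi₂ ((hEm ψ).sub (hEm ψ')) (hEb ψ ψ')
      have hsp := integral_Ioi_split hdint hac
      have hzero : (∫ t in Ioi c, Lf V₁ V₂ t * |E ψ t - E ψ' t|) = 0 := by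
        rw [setIntegral_congr_fun measurableSet_Ioi
          (g := fun _ => (0:ℝ)) fun t ht => ?_]
        · exact integral_zero _ _
        · have : ¬ t ≤ c := not_le.2 ht
          simp [hE, this]
      have hIoc : (∫ t in Ioc a c, Lf V₁ V₂ t * |E ψ t - E ψ' t|)
          ≤ (∫ t in Ioc a c, Lf V₁ V₂ t) * dist ψ ψ' := by
        rw [← integral_mul_const]
        refine setIntegral_mono_on hdint.integrableOn
          ((hLi.mul_const _).integrableOn) measurableSet_Ioc fun t _ =>
          mul_le_mul_of_nonneg_left (hEb ψ ψ' t) (Lf_nonneg t)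
      have h4 : (∫ t in Ioc a c, Lf V₁ V₂ t) * dist ψ ψ' ≤ 4⁻¹ * dist ψ ψ' :=
        mul_le_mul_of_nonneg_right hsmall dist_nonneg
      rw [hsp, hzero]
      linarith
    obtain ⟨ψ, hψ⟩ := exists_fixedPoint hm₁ hm₂ hi₁ hi₂ a E hEm hEb hEd
    have hψc : (ψ : ℝ → ℝ) c = φ₀ c := by
      have h1 := hψ c
      rw [max_eq_left hac] at h1
      have h2 : (∫ t in Ioi c, Ff V₁ V₂ t (E ψ t)) = ∫ t in Ioi c, Ff V₁ V₂ t (φ₀ t) := by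
        refine setIntegral_congr_fun measurableSet_Ioi fun t ht => ?_
        have : ¬ t ≤ c := not_le.2 ht
        simp [hE, this]
      have h3 := hφ₀ c
      rw [max_self] at h3
      rw [h1, h2, ← h3]
    refine ⟨E ψ, ?_, ?_⟩
    · have : (E ψ) = fun t => if t ≤ c then (ψ : ℝ → ℝ) t else φ₀ t := rfl
      rw [this]
      exact Continuous.if_le ψ.continuous hφ₀c continuous_id continuous_const
        fun t ht => by rw [ht] at *; simpa using hψc
    · intro x
      by_cases hxc : x ≤ c
      · have : E ψ x = (ψ : ℝ → ℝ) x := by simp [hE, hxc]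
        rw [this]
        exact hψ x
      · push_neg at hxc
        have hEx : E ψ x = φ₀ x := by simp [hE, not_le.2 hxc]
        have h1 := hφ₀ x
        rw [max_eq_left hxc.le] at h1
        have hmax : max x a = x := max_eq_left (hac.trans hxc.le)
        rw [hEx, hmax, h1]
        refine setIntegral_congr_fun measurableSet_Ioi fun t ht => ?_
        have : ¬ t ≤ c := not_le.2 (hxc.trans ht)
        simp [hE, this]
/-! ### Uniqueness -/

lemma sol_unique (hm₁ : Measurable V₁) (hm₂ : Measurable V₂)
    (hi₁ : Integrable V₁) (hi₂ : Integrable V₂) {φ Ψ : ℝ → ℝ}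
    (hφc : Continuous φ) (hΨc : Continuous Ψ)
    (hφ : ∀ x, 0 ≤ x → φ x = ∫ t in Ioi x, Ff V₁ V₂ t (φ t))
    (hΨ : ∀ x, 0 ≤ x → Ψ x = ∫ t in Ioi x, Ff V₁ V₂ t (Ψ t)) :
    ∀ x, 0 ≤ x → Ψ x = φ x := by
  have hLi := integrable_Lf hi₁ hi₂
  have hLm := measurable_Lf hm₁ hm₂
  have hφint : Integrable (fun t => Ff V₁ V₂ t (φ t)) :=
    integrable_Ff_comp hm₁ hm₂ hi₁ hi₂ hφc.measurable
  have hΨint : Integrable (fun t => Ff V₁ V₂ t (Ψ t)) :=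
    integrable_Ff_comp hm₁ hm₂ hi₁ hi₂ hΨc.measurable
  have habs : ∀ (ρ : ℝ → ℝ), (∀ x, 0 ≤ x → ρ x = ∫ t in Ioi x, Ff V₁ V₂ t (ρ t)) →
      ∀ s, 0 ≤ s → |ρ s| ≤ ∫ t in Ioi (0:ℝ), Lf V₁ V₂ t := by
    intro ρ hρ s hs
    rw [hρ s hs]
    calc |∫ t in Ioi s, Ff V₁ V₂ t (ρ t)| ≤ ∫ t in Ioi s, Lf V₁ V₂ t := by
          rw [← Real.norm_eq_abs]
          refine norm_integral_le_of_norm_le hLi.integrableOn (ae_of_all _ fun t => ?_)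
          rw [Real.norm_eq_abs]; exact abs_Ff_le t (ρ t)
      _ ≤ ∫ t in Ioi (0:ℝ), Lf V₁ V₂ t :=
          setIntegral_mono_set hLi.integrableOn (ae_of_all _ Lf_nonneg)
            ((Ioi_subset_Ioi hs).eventuallyLE)
  set d : ℝ → ℝ := fun t => |Ψ (max t 0) - φ (max t 0)| with hd
  have hdc : Continuous d :=
    ((hΨc.comp (continuous_id.max continuous_const)).sub
      (hφc.comp (continuous_id.max continuous_const))).abs
  have hd0 : ∀ t, 0 ≤ d t := fun t => abs_nonneg _
  have hdb : ∀ t, d t ≤ 2 * ∫ s in Ioi (0:ℝ), Lf V₁ V₂ s := by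
    intro t
    have h1 := habs Ψ hΨ (max t 0) (le_max_right t 0)
    have h2 := habs φ hφ (max t 0) (le_max_right t 0)
    calc d t ≤ |Ψ (max t 0)| + |φ (max t 0)| := by
          simpa [hd, sub_eq_add_neg] using abs_add_le (Ψ (max t 0)) (-φ (max t 0))
      _ ≤ 2 * ∫ s in Ioi (0:ℝ), Lf V₁ V₂ s := by linarith
  -- the basic recursion estimate over an interval (x, c] assuming equality beyond c
  have key : ∀ a, 0 ≤ a → ∀ c, a ≤ c → (∫ t in Ioc a c, Lf V₁ V₂ t) ≤ 4⁻¹ →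
      (∀ t, c ≤ t → Ψ t = φ t) → ∀ x, a ≤ x → Ψ x = φ x := by
    intro a ha c hac hsmall heq
    have hind : Integrable ((Iic c).indicator fun t => 2 * Lf V₁ V₂ t) :=
      (hLi.const_mul 2).indicator measurableSet_Iic
    have hgr := gronwall_abs (L := (Iic c).indicator fun t => 2 * Lf V₁ V₂ t) (d := d)
      hind
      (fun t => Set.indicator_nonneg
        (fun s _ => mul_nonneg zero_le_two (Lf_nonneg s)) t)
      hdc.measurable hd0 hdb (a := a) ?_ ?_
    · intro x hx
      have hx0 : 0 ≤ x := ha.trans hx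
      have := hgr x hx
      rw [hd] at this
      simp only [max_eq_left hx0] at this
      exact sub_eq_zero.1 (abs_eq_zero.1 this)
    · -- smallness
      rw [setIntegral_indicator measurableSet_Iic, Ioi_inter_Iic,
        integral_const_mul 2 (Lf V₁ V₂)]
      linarith
    · -- recursion
      intro x hx
      have hx0 : 0 ≤ x := ha.trans hx
      have hrw : ∀ t, (Iic c).indicator (fun s => 2 * Lf V₁ V₂ s) t * d t
          = (Iic c).indicator (fun s => 2 * Lf V₁ V₂ s * d s) t := by
        intro t
        by_cases htc : t ∈ Iic c <;> simp [htc]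
      have hRHS : (∫ t in Ioi x, (Iic c).indicator (fun s => 2 * Lf V₁ V₂ s) t * d t)
          = ∫ t in Ioc x c, 2 * Lf V₁ V₂ t * d t := by
        simp_rw [hrw]
        rw [setIntegral_indicator measurableSet_Iic, Ioi_inter_Iic]
      rw [hRHS]
      have hdint : Integrable fun t => 2 * Lf V₁ V₂ t * d t := by
        have : Integrable fun t => Lf V₁ V₂ t * |Ψ (max t 0) - φ (max t 0)| :=
          integrable_Lf_mul hm₁ hm₂ hi₁ hi₂
            ((hΨc.comp (continuous_id.max continuous_const)).sub
              (hφc.comp (continuous_id.max continuous_const))).measurable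
            (D := 2 * ∫ s in Ioi (0:ℝ), Lf V₁ V₂ s)
            (fun t => hdb t)
        have h2 := this.const_mul 2
        refine h2.congr ?_
        refine ae_of_all _ fun t => by rw [hd]; ring
      by_cases hxc : c ≤ x
      · have : d x = 0 := by
          rw [hd]
          simp only [max_eq_left hx0]
          rw [heq x hxc, sub_self, abs_zero]
        rw [this]
        exact setIntegral_nonneg measurableSet_Ioc fun t _ =>
          mul_nonneg (mul_nonneg zero_le_two (Lf_nonneg t)) (hd0 t)
      · push_neg at hxc
        have hdx : d x = |Ψ x - φ x| := by rw [hd]; simp [max_eq_left hx0]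
        have hq : Ψ x - φ x = ∫ t in Ioc x c, (Ff V₁ V₂ t (Ψ t) - Ff V₁ V₂ t (φ t)) := by
          have hsub : Ψ x - φ x = ∫ t in Ioi x, (Ff V₁ V₂ t (Ψ t) - Ff V₁ V₂ t (φ t)) := by
            rw [hΨ x hx0, hφ x hx0,
              integral_sub hΨint.integrableOn hφint.integrableOn]
          have hqint : Integrable fun t => Ff V₁ V₂ t (Ψ t) - Ff V₁ V₂ t (φ t) :=
            hΨint.sub hφint
          have hsp := integral_Ioi_split hqint (le_of_lt hxc)
          have hzero : (∫ t in Ioi c, (Ff V₁ V₂ t (Ψ t) - Ff V₁ V₂ t (φ t))) = 0 := by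
            rw [setIntegral_congr_fun measurableSet_Ioi
              (g := fun _ => (0:ℝ)) fun t ht => ?_]
            · exact integral_zero _ _
            · rw [heq t (le_of_lt ht), sub_self]
          rw [hsub, hsp, hzero, add_zero]
        rw [hdx, hq]
        calc |∫ t in Ioc x c, (Ff V₁ V₂ t (Ψ t) - Ff V₁ V₂ t (φ t))|
            ≤ ∫ t in Ioc x c, |Ff V₁ V₂ t (Ψ t) - Ff V₁ V₂ t (φ t)| := by
              rw [← Real.norm_eq_abs]
              refine (norm_integral_le_integral_norm _).trans (le_of_eq ?_)
              simp [Real.norm_eq_abs]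
          _ ≤ ∫ t in Ioc x c, 2 * Lf V₁ V₂ t * d t := by
              refine setIntegral_mono_on
                ((hΨint.sub hφint).abs).integrableOn hdint.integrableOn
                measurableSet_Ioc fun t ht => ?_
              have hmax : max t 0 = t := max_eq_left (hx0.trans (le_of_lt ht.1))
              have := abs_Ff_sub_le (V₁ := V₁) (V₂ := V₂) t (Ψ t) (φ t)
              rw [hd]
              simp only [hmax]
              exact this
  -- induction over the size of the tail
  have claim : ∀ (k : ℕ) (a : ℝ), 0 ≤ a →
      (∫ t in Ioi a, Lf V₁ V₂ t) ≤ (k + 1 : ℝ) * 4⁻¹ → ∀ x, a ≤ x → Ψ x = φ x := by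
    intro k
    induction k with
    | zero =>
      intro a ha hWa
      -- direct tail estimate
      have hgr := gronwall_abs (L := fun t => 2 * Lf V₁ V₂ t) (d := d)
        (hLi.const_mul 2) (fun t => mul_nonneg zero_le_two (Lf_nonneg t))
        hdc.measurable hd0 hdb (a := a) ?_ ?_
      · intro x hx
        have hx0 : 0 ≤ x := ha.trans hx
        have := hgr x hx
        rw [hd] at this
        simp only [max_eq_left hx0] at this
        exact sub_eq_zero.1 (abs_eq_zero.1 this)
      · rw [integral_const_mul 2 (Lf V₁ V₂)]
        push_cast at hWa
        linarith
      · intro x hx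
        have hx0 : 0 ≤ x := ha.trans hx
        have hdx : d x = |Ψ x - φ x| := by rw [hd]; simp [max_eq_left hx0]
        have hsub : Ψ x - φ x = ∫ t in Ioi x, (Ff V₁ V₂ t (Ψ t) - Ff V₁ V₂ t (φ t)) := by
          rw [hΨ x hx0, hφ x hx0,
            integral_sub hΨint.integrableOn hφint.integrableOn]
        have hdint : Integrable fun t => 2 * Lf V₁ V₂ t * d t := by
          have : Integrable fun t => Lf V₁ V₂ t * |Ψ (max t 0) - φ (max t 0)| :=
            integrable_Lf_mul hm₁ hm₂ hi₁ hi₂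
              ((hΨc.comp (continuous_id.max continuous_const)).sub
                (hφc.comp (continuous_id.max continuous_const))).measurable
              (D := 2 * ∫ s in Ioi (0:ℝ), Lf V₁ V₂ s)
              (fun t => hdb t)
          refine (this.const_mul 2).congr (ae_of_all _ fun t => by rw [hd]; ring)
        rw [hdx, hsub]
        calc |∫ t in Ioi x, (Ff V₁ V₂ t (Ψ t) - Ff V₁ V₂ t (φ t))|
            ≤ ∫ t in Ioi x, |Ff V₁ V₂ t (Ψ t) - Ff V₁ V₂ t (φ t)| := by
              rw [← Real.norm_eq_abs]
              refine (norm_integral_le_integral_norm _).trans (le_of_eq ?_)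
              simp [Real.norm_eq_abs]
          _ ≤ ∫ t in Ioi x, 2 * Lf V₁ V₂ t * d t := by
              refine setIntegral_mono_on
                ((hΨint.sub hφint).abs).integrableOn hdint.integrableOn
                measurableSet_Ioi fun t ht => ?_
              have hmax : max t 0 = t := max_eq_left (hx0.trans (le_of_lt ht))
              have := abs_Ff_sub_le (V₁ := V₁) (V₂ := V₂) t (Ψ t) (φ t)
              rw [hd]
              simp only [hmax]
              exact this
    | succ k ih =>
      intro a ha hWa
      by_cases hk : (∫ t in Ioi a, Lf V₁ V₂ t) ≤ (k + 1 : ℝ) * 4⁻¹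
      · exact ih a ha hk
      push_neg at hk
      obtain ⟨c, hac, hc⟩ := exists_cut hLi Lf_nonneg
        (show (0:ℝ) < (k + 1 : ℝ) * 4⁻¹ by positivity) hk.le
      have hsmall : (∫ t in Ioc a c, Lf V₁ V₂ t) ≤ 4⁻¹ := by
        have hsp := integral_Ioi_split hLi hac
        rw [hc] at hsp
        push_cast at hWa hsp ⊢
        linarith
      have heqc := ih c (ha.trans hac) (le_of_eq hc)
      exact key a ha c hac hsmall (fun t ht => heqc t ht)
  obtain ⟨k, hk⟩ := exists_nat_ge (4 * ∫ t in Ioi (0:ℝ), Lf V₁ V₂ t)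
  refine claim k 0 le_rfl ?_
  push_cast
  linarith
end Stmt1Aux

open Stmt1Aux

/-- For real-valued `v₁, v₂ ∈ L¹(ℝ₊)`, the ODE
`φ' = -v₁ sin(2φ) - v₂ cos(2φ)` has a unique (up to values on `ℝ₊`)
absolutely continuous real-valued solution on `ℝ₊` tending to `0` at infinity.
Absolute continuity is expressed via an integrable derivative `g` satisfying
the ODE a.e. together with the fundamental theorem of calculus identity. -/
theorem stmt_1 (v₁ v₂ : ℝ → ℝ)
    (hv₁ : IntegrableOn v₁ (Ici 0)) (hv₂ : IntegrableOn v₂ (Ici 0)) :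
    ∃ φ : ℝ → ℝ,
      (∃ g : ℝ → ℝ, IntegrableOn g (Ici 0) ∧
        (∀ᵐ x ∂(volume.restrict (Ici (0:ℝ))),
          g x = -v₁ x * Real.sin (2 * φ x) - v₂ x * Real.cos (2 * φ x)) ∧
        (∀ x ∈ Ici (0:ℝ), φ x = φ 0 + ∫ t in Ioc (0:ℝ) x, g t) ∧
        Filter.Tendsto φ Filter.atTop (nhds 0)) ∧
      (∀ ψ : ℝ → ℝ,
        (∃ g : ℝ → ℝ, IntegrableOn g (Ici 0) ∧
          (∀ᵐ x ∂(volume.restrict (Ici (0:ℝ))),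
            g x = -v₁ x * Real.sin (2 * ψ x) - v₂ x * Real.cos (2 * ψ x)) ∧
          (∀ x ∈ Ici (0:ℝ), ψ x = ψ 0 + ∫ t in Ioc (0:ℝ) x, g t) ∧
          Filter.Tendsto ψ Filter.atTop (nhds 0)) →
        ∀ x ∈ Ici (0:ℝ), ψ x = φ x) := by
  classical
  -- measurable representatives of the indicator-extensions of `v₁, v₂`
  have hv₁' : Integrable ((Ici (0:ℝ)).indicator v₁) :=
    hv₁.integrable_indicator measurableSet_Ici
  have hv₂' : Integrable ((Ici (0:ℝ)).indicator v₂) :=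
    hv₂.integrable_indicator measurableSet_Ici
  set sm₁ := hv₁'.aestronglyMeasurable with hsm₁
  set sm₂ := hv₂'.aestronglyMeasurable with hsm₂
  set V₁ : ℝ → ℝ := sm₁.mk ((Ici (0:ℝ)).indicator v₁) with hV₁def
  set V₂ : ℝ → ℝ := sm₂.mk ((Ici (0:ℝ)).indicator v₂) with hV₂def
  have hm₁ : Measurable V₁ := sm₁.stronglyMeasurable_mk.measurable
  have hm₂ : Measurable V₂ := sm₂.stronglyMeasurable_mk.measurable
  have hae₁ : (Ici (0:ℝ)).indicator v₁ =ᵐ[volume] V₁ := sm₁.ae_eq_mk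
  have hae₂ : (Ici (0:ℝ)).indicator v₂ =ᵐ[volume] V₂ := sm₂.ae_eq_mk
  have hi₁ : Integrable V₁ := hv₁'.congr hae₁
  have hi₂ : Integrable V₂ := hv₂'.congr hae₂
  have hres₁ : V₁ =ᵐ[volume.restrict (Ici (0:ℝ))] v₁ := by
    filter_upwards [ae_restrict_of_ae hae₁, ae_restrict_mem measurableSet_Ici]
      with x hx hmem
    rw [← hx, Set.indicator_of_mem hmem]
  have hres₂ : V₂ =ᵐ[volume.restrict (Ici (0:ℝ))] v₂ := by
    filter_upwards [ae_restrict_of_ae hae₂, ae_restrict_mem measurableSet_Ici]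
      with x hx hmem
    rw [← hx, Set.indicator_of_mem hmem]
  have hLi := integrable_Lf hi₁ hi₂
  -- existence
  obtain ⟨k, hk⟩ := exists_nat_ge (4 * ∫ t in Ioi (0:ℝ), Lf V₁ V₂ t)
  obtain ⟨φ, hφc, hφeq⟩ := exists_sol hm₁ hm₂ hi₁ hi₂ k 0 (by push_cast; linarith)
  have hφeq' : ∀ x, 0 ≤ x → φ x = ∫ t in Ioi x, Ff V₁ V₂ t (φ t) := fun x hx => by
    have := hφeq x
    rwa [max_eq_left hx] at this
  have hFφint : Integrable (fun t => Ff V₁ V₂ t (φ t)) :=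
    integrable_Ff_comp hm₁ hm₂ hi₁ hi₂ hφc.measurable
  refine ⟨φ, ⟨fun x => -(Ff V₁ V₂ x (φ x)), ?_, ?_, ?_, ?_⟩, ?_⟩
  · exact hFφint.neg.integrableOn
  · filter_upwards [hres₁, hres₂] with x h1 h2
    simp only [Ff]
    rw [h1, h2]; ring
  · intro x hx
    have hx0 : (0:ℝ) ≤ x := hx
    have hsplit := integral_Ioi_split hFφint hx0
    have h0 := hφeq' 0 le_rfl
    have hx' := hφeq' x hx0
    have hneg : (∫ t in Ioc (0:ℝ) x, -(Ff V₁ V₂ t (φ t)))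
        = -∫ t in Ioc (0:ℝ) x, Ff V₁ V₂ t (φ t) := integral_neg _
    rw [hx', h0, hneg]
    linarith
  · refine squeeze_zero_norm' ?_ (tendsto_integral_Ioi hLi)
    filter_upwards [eventually_ge_atTop (0:ℝ)] with x hx
    rw [Real.norm_eq_abs, hφeq' x hx, ← Real.norm_eq_abs]
    refine norm_integral_le_of_norm_le hLi.integrableOn (ae_of_all _ fun t => ?_)
    rw [Real.norm_eq_abs]; exact abs_Ff_le t (φ t)
  · rintro ψ ⟨g, hgint, hgae, hgftc, hglim⟩ x hx
    have hx0 : (0:ℝ) ≤ x := hx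
    have hGint : Integrable ((Ici (0:ℝ)).indicator g) :=
      hgint.integrable_indicator measurableSet_Ici
    set Ψ : ℝ → ℝ := fun y => ψ 0 + ∫ t in (0:ℝ)..y, (Ici (0:ℝ)).indicator g t
      with hΨdef
    have hΨc : Continuous Ψ := continuous_const.add (hGint.continuous_primitive 0)
    have hIoc : ∀ y : ℝ, 0 ≤ y →
        (∫ t in Ioc (0:ℝ) y, (Ici (0:ℝ)).indicator g t) = ∫ t in Ioc (0:ℝ) y, g t := by
      intro y hy
      rw [setIntegral_indicator measurableSet_Ici,
        show Ioc (0:ℝ) y ∩ Ici 0 = Ioc 0 y from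
          Set.inter_eq_left.2 fun t ht => le_of_lt ht.1]
    have hΨψ : ∀ y, 0 ≤ y → Ψ y = ψ y := by
      intro y hy
      rw [hΨdef]
      simp only
      rw [intervalIntegral.integral_of_le hy, hIoc y hy, ← hgftc y hy]
    -- limit identity
    have hψ0 : ψ 0 + (∫ t in Ioi (0:ℝ), (Ici (0:ℝ)).indicator g t) = 0 := by
      have hlim2 : Tendsto Ψ atTop
          (nhds (ψ 0 + ∫ t in Ioi (0:ℝ), (Ici (0:ℝ)).indicator g t)) :=
        tendsto_const_nhds.add
          (intervalIntegral_tendsto_integral_Ioi 0 hGint.integrableOn tendsto_id)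
      have hΨlim : Tendsto ψ atTop
          (nhds (ψ 0 + ∫ t in Ioi (0:ℝ), (Ici (0:ℝ)).indicator g t)) := by
        refine hlim2.congr' ?_
        filter_upwards [eventually_ge_atTop (0:ℝ)] with b hb
        exact hΨψ b hb
      exact tendsto_nhds_unique hΨlim hglim
    have hIoi : ∀ y : ℝ, 0 ≤ y →
        (∫ t in Ioi y, (Ici (0:ℝ)).indicator g t) = ∫ t in Ioi y, g t := by
      intro y hy
      rw [setIntegral_indicator measurableSet_Ici,
        show Ioi y ∩ Ici (0:ℝ) = Ioi y from
          Set.inter_eq_left.2 fun t ht => hy.trans (le_of_lt ht)]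
    -- integral equation for Ψ
    have hΨeq : ∀ y, 0 ≤ y → Ψ y = ∫ t in Ioi y, Ff V₁ V₂ t (Ψ t) := by
      intro y hy
      have hsp := integral_Ioi_split hGint hy
      have e1 : Ψ y = -(∫ t in Ioi y, (Ici (0:ℝ)).indicator g t) := by
        rw [hΨdef]
        simp only
        rw [intervalIntegral.integral_of_le hy]
        linarith [hsp, hψ0]
      have e3 : (∫ t in Ioi y, g t) = ∫ t in Ioi y, -(Ff V₁ V₂ t (ψ t)) := by
        refine integral_congr_ae ?_
        have hsub : Ioi y ⊆ Ici (0:ℝ) := fun t ht => hy.trans (le_of_lt ht)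
        have h1 := ae_restrict_of_ae_restrict_of_subset hsub hgae
        have h2 := ae_restrict_of_ae_restrict_of_subset hsub hres₁
        have h3 := ae_restrict_of_ae_restrict_of_subset hsub hres₂
        filter_upwards [h1, h2, h3] with t ht h1t h2t
        rw [ht, ← h1t, ← h2t]
        simp only [Ff]; ring
      have e4 : (∫ t in Ioi y, Ff V₁ V₂ t (ψ t)) = ∫ t in Ioi y, Ff V₁ V₂ t (Ψ t) :=
        setIntegral_congr_fun measurableSet_Ioi fun t ht =>
          by rw [hΨψ t (hy.trans (le_of_lt ht))]
      rw [e1, hIoi y hy, e3, integral_neg, neg_neg, e4]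
    have huniq := sol_unique hm₁ hm₂ hi₁ hi₂ hφc hΨc hφeq' hΨeq x hx0
    rw [← hΨψ x hx0]
    exact huniq
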